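/- Let g_1, ..., g_K ∈ R^m and W the probability simplex in R^K. The problem max_{‖d‖ ≤ 1} min_{i∈[K]} ⟨g_i, d⟩ has optimal value equal to min_{w ∈ W} ‖g_w‖ when the minimum-norm element g_{w*} of the convex hull of {g_i} is nonzero, and the maximizer is d* = g_{w*}/‖g_{w*}‖. -/

import Mathlib

open scoped RealInnerProductSpace

section Aux

variable {m K : ℕ}

/-- Variational inequality: each ⟪g i, gw⟫ ≥ ‖gw‖². -/
lemma mgda_varineq (g : Fin K → EuclideanSpace ℝ (Fin m))
    (w : Fin K → ℝ) (hw : w ∈ stdSimplex ℝ (Fin K))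
    (hmin : ∀ v ∈ stdSimplex ℝ (Fin K), ‖∑ i, w i • g i‖ ≤ ‖∑ i, v i • g i‖)
    (i : Fin K) : ‖∑ j, w j • g j‖ ^ 2 ≤ ⟪g i, ∑ j, w j • g j⟫ := by
  set gw : EuclideanSpace ℝ (Fin m) := ∑ j, w j • g j with hgw
  set u : EuclideanSpace ℝ (Fin m) := g i - gw with hu
  have hsingle : ∑ j, (Pi.single i 1 : Fin K → ℝ) j • g j = g i := by
    rw [Finset.sum_eq_single i]
    · simp
    · intro b _ hb; simp [Pi.single_eq_of_ne hb]
    · simp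
  have key : ∀ t : ℝ, 0 ≤ t → t ≤ 1 → ‖gw‖ ^ 2 ≤ ‖gw + t • u‖ ^ 2 := by
    intro t ht0 ht1
    have hv : (1 - t) • w + t • (Pi.single i 1 : Fin K → ℝ) ∈ stdSimplex ℝ (Fin K) :=
      (convex_stdSimplex ℝ (Fin K)) hw (single_mem_stdSimplex ℝ i) (by linarith) ht0 (by ring)
    have hsum : ∑ j, ((1 - t) • w + t • (Pi.single i 1 : Fin K → ℝ)) j • g j
        = gw + t • u := by
      simp only [Pi.add_apply, Pi.smul_apply, smul_eq_mul, add_smul, mul_smul,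
        Finset.sum_add_distrib, ← Finset.smul_sum, hsingle]
      rw [hu, hgw]
      module
    have := hmin _ hv
    rw [hgw, hsum] at this
    nlinarith [norm_nonneg (gw + t • u), norm_nonneg gw]
  have expand : ∀ t : ℝ, ‖gw + t • u‖ ^ 2 = ‖gw‖ ^ 2 + 2 * t * ⟪gw, u⟫ + t ^ 2 * ‖u‖ ^ 2 := by
    intro t
    rw [norm_add_sq_real, real_inner_smul_right, norm_smul, mul_pow, Real.norm_eq_abs, sq_abs]
    ring
  have hc : 0 ≤ ⟪gw, u⟫ := by
    by_contra hlt
    push_neg at hlt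
    set c := ⟪gw, u⟫ with hcdef
    have hu2 : 0 < ‖u‖ ^ 2 := by
      rcases eq_or_ne u 0 with h | h
      · exfalso; rw [hcdef, h] at hlt; simp at hlt
      · exact pow_pos (norm_pos_iff.mpr h) 2
    set t := min 1 (-c / ‖u‖ ^ 2) with htdef
    have ht0 : 0 < t := lt_min one_pos (div_pos (neg_pos.mpr hlt) hu2)
    have ht1 : t ≤ 1 := min_le_left _ _
    have hkey := key t ht0.le ht1
    rw [expand] at hkey
    have h3 : t * ‖u‖ ^ 2 ≤ -c := by
      have ht : t ≤ -c / ‖u‖ ^ 2 := min_le_right _ _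
      calc t * ‖u‖ ^ 2 ≤ (-c / ‖u‖ ^ 2) * ‖u‖ ^ 2 := by nlinarith
        _ = -c := div_mul_cancel₀ _ hu2.ne'
    nlinarith
  have hexp : ⟪gw, g i⟫ = ‖gw‖ ^ 2 + ⟪gw, u⟫ := by
    rw [hu, inner_sub_right, real_inner_self_eq_norm_sq]; ring
  rw [real_inner_comm]
  linarith

end Aux

/-- MGDA primal-dual relation: the max-min value equals the minimum norm over the hull. -/
theorem stmt_8 (m K : ℕ) (hK : 0 < K)
    (g : Fin K → EuclideanSpace ℝ (Fin m))
    (w : Fin K → ℝ) (hw : w ∈ stdSimplex ℝ (Fin K))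
    (hmin : ∀ v ∈ stdSimplex ℝ (Fin K), ‖∑ i, w i • g i‖ ≤ ‖∑ i, v i • g i‖)
    (hne : (∑ i, w i • g i) ≠ 0) :
    haveI : Nonempty (Fin K) := Fin.pos_iff_nonempty.mp hK
    let gw := ∑ i, w i • g i
    let d := ‖gw‖⁻¹ • gw
    ‖d‖ ≤ 1 ∧ (⨅ i : Fin K, ⟪g i, d⟫) = ‖gw‖ ∧
      ∀ d' : EuclideanSpace ℝ (Fin m), ‖d'‖ ≤ 1 →
        (⨅ i : Fin K, ⟪g i, d'⟫) ≤ ‖gw‖ := by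
  haveI : Nonempty (Fin K) := Fin.pos_iff_nonempty.mp hK
  intro gw d
  have hgwpos : 0 < ‖gw‖ := norm_pos_iff.mpr hne
  have hinner_sum : ∀ d' : EuclideanSpace ℝ (Fin m), ⟪gw, d'⟫ = ∑ i, w i * ⟪g i, d'⟫ := by
    intro d'
    rw [show (gw : EuclideanSpace ℝ (Fin m)) = ∑ i, w i • g i from rfl, sum_inner]
    exact Finset.sum_congr rfl fun i _ => real_inner_smul_left _ _ _
  have hbdd : ∀ d' : EuclideanSpace ℝ (Fin m), BddBelow (Set.range fun i : Fin K => ⟪g i, d'⟫) :=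
    fun d' => (Set.finite_range _).bddBelow
  have hinf_le : ∀ d' : EuclideanSpace ℝ (Fin m), (⨅ i : Fin K, ⟪g i, d'⟫) ≤ ⟪gw, d'⟫ := by
    intro d'
    rw [hinner_sum]
    calc (⨅ i : Fin K, ⟪g i, d'⟫) = ∑ i, w i * (⨅ j : Fin K, ⟪g j, d'⟫) := by
          rw [← Finset.sum_mul, hw.2, one_mul]
      _ ≤ ∑ i, w i * ⟪g i, d'⟫ := by
          apply Finset.sum_le_sum
          intro i _
          exact mul_le_mul_of_nonneg_left (ciInf_le (hbdd d') i) (hw.1 i)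
  refine ⟨?_, ?_, ?_⟩
  · rw [norm_smul, norm_inv, norm_norm, inv_mul_cancel₀ hgwpos.ne']
  · refine le_antisymm ?_ ?_
    · have h := hinf_le d
      have hdd : ⟪gw, d⟫ = ‖gw‖ := by
        rw [show (d : EuclideanSpace ℝ (Fin m)) = ‖gw‖⁻¹ • gw from rfl,
          real_inner_smul_right, real_inner_self_eq_norm_sq, sq, inv_mul_cancel_left₀ hgwpos.ne']
      linarith
    · apply le_ciInf
      intro i
      have hvi : ‖gw‖ ^ 2 ≤ ⟪g i, gw⟫ := mgda_varineq g w hw hmin i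
      have hdi : ⟪g i, d⟫ = ‖gw‖⁻¹ * ⟪g i, gw⟫ := real_inner_smul_right _ _ _
      rw [hdi]
      calc ‖gw‖ = ‖gw‖⁻¹ * ‖gw‖ ^ 2 := by rw [sq, inv_mul_cancel_left₀ hgwpos.ne']
        _ ≤ ‖gw‖⁻¹ * ⟪g i, gw⟫ :=
            mul_le_mul_of_nonneg_left hvi (inv_nonneg.mpr hgwpos.le)
  · intro d' hd'
    have h1 := hinf_le d'
    have h2 : ⟪gw, d'⟫ ≤ ‖gw‖ := by
      calc ⟪gw, d'⟫ ≤ ‖gw‖ * ‖d'‖ := real_inner_le_norm gw d'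
        _ ≤ ‖gw‖ * 1 := by nlinarith
        _ = ‖gw‖ := mul_one _
    linarith
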